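/- If a piecewise affine function on a cell has the property that its value at the center of each face equals the average of its values at the four corners of that face, then the averaged difference Δ₁ỹ across the cell equals the average of ∂ỹ/∂x₁ over the cell: Δ₁ỹ = ⨍_Q ∂ỹ/∂x₁ dξ (after rescaling). -/
import Mathlib


open MeasureTheory

/-- If the interpolation `y` on a cell has the property that the average of its values at
the four corners of each of the two `x₁`-faces equals the mean of `y` over that face, and
the fundamental theorem of calculus holds in the `x₁`-direction with derivative `g`, then
the averaged difference `Δ₁y` across the cell equals the mean of `∂y/∂x₁` over the cell. -/
theorem averaged_difference_eq_cell_mean (k : ℝ) (hk : 0 < k) (x1 : ℝ) (x' : Fin 2 → ℝ)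
    (y g : ℝ → (Fin 2 → ℝ) → Fin 3 → ℝ)
    (S' : Set (Fin 2 → ℝ))
    (hS' : S' = Set.Icc (fun i => x' i - 1/2) (fun i => x' i + 1/2))
    (corner : Fin 4 → Fin 2 → ℝ)
    (hcorner : corner = ![![x' 0 - 1/2, x' 1 - 1/2], ![x' 0 - 1/2, x' 1 + 1/2],
      ![x' 0 + 1/2, x' 1 + 1/2], ![x' 0 + 1/2, x' 1 - 1/2]])
    (hmean : ∀ t ∈ ({x1 - 1/(2*k), x1 + 1/(2*k)} : Set ℝ),
      (1/4 : ℝ) • ∑ c : Fin 4, y t (corner c) = ∫ ξ in S', y t ξ)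
    (hint : ∀ t ∈ ({x1 - 1/(2*k), x1 + 1/(2*k)} : Set ℝ), IntegrableOn (y t) S')
    (hftc : ∀ ξ ∈ S', y (x1 + 1/(2*k)) ξ - y (x1 - 1/(2*k)) ξ =
      ∫ t in (x1 - 1/(2*k))..(x1 + 1/(2*k)), g t ξ)
    (hgint : IntegrableOn (fun ξ => ∫ t in (x1 - 1/(2*k))..(x1 + 1/(2*k)), g t ξ) S') :
    k • ((1/4 : ℝ) • ∑ c : Fin 4, y (x1 + 1/(2*k)) (corner c)
        - (1/4 : ℝ) • ∑ c : Fin 4, y (x1 - 1/(2*k)) (corner c))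
      = k • ∫ ξ in S', ∫ t in (x1 - 1/(2*k))..(x1 + 1/(2*k)), g t ξ := by
  have hL : (x1 - 1/(2*k)) ∈ ({x1 - 1/(2*k), x1 + 1/(2*k)} : Set ℝ) := Or.inl rfl
  have hR : (x1 + 1/(2*k)) ∈ ({x1 - 1/(2*k), x1 + 1/(2*k)} : Set ℝ) := Or.inr rfl
  congr 1
  rw [hmean _ hR, hmean _ hL, ← integral_sub (hint _ hR) (hint _ hL)]
  refine setIntegral_congr_fun ?_ fun ξ hξ => hftc ξ hξ
  rw [hS']; exact measurableSet_Icc
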